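/- Let n ≥ 0 be an integer, with h, δ, ν_n and β as defined. For every f ∈ K_∞⟨t⟩ one has β(f·ν_n) = (f − (−θ)^δ f^{(1)})·ν_n. Consequently, β maps the 𝔽[t]-submodule 𝔪_∞⟨t⟩·ν_n into itself and restricts to a bijection of 𝔪_∞⟨t⟩·ν_n onto itself. -/

import Mathlib

open scoped Classical ENNReal
open Filter

noncomputable section

namespace Carlitz

variable (F : Type) [Field F] [Fintype F]

/-- `K∞ = 𝔽((1/θ))`, realized as the field of formal Laurent series over `F`;
the Laurent-series variable plays the role of `1/θ`. -/
abbrev Kinf := LaurentSeries F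

/-- `θ ∈ K∞`, the inverse of the Laurent-series variable. -/
def theta : Kinf F := HahnSeries.single (-1 : ℤ) (1 : F)

/-- The absolute value `|x| = q ^ (deg_θ x)`, with values in `ℝ≥0∞`. -/
def Kabs {R : Type} [Zero R] (q : ℕ) (x : HahnSeries ℤ R) : ℝ≥0∞ :=
  if x = 0 then 0 else (q : ℝ≥0∞) ^ (-x.order)

/-- The ambient ring of the Tate algebra: formal power series in `t` over `K∞`. -/
abbrev TS := PowerSeries (Kinf F)

/-- The `i`-th `t`-coefficient. -/
def coeffT (i : ℕ) (f : TS F) : Kinf F := PowerSeries.coeff (R := Kinf F) i f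

/-- Membership in the Tate algebra `K∞⟨t⟩`: the coefficients tend to `0`. -/
def IsTate (f : TS F) : Prop :=
  Tendsto (fun i => Kabs (Fintype.card F) (coeffT F i f)) atTop (nhds 0)

/-- The Gauss norm `‖f‖ = sup_i |a_i|`. -/
def gnorm (f : TS F) : ℝ≥0∞ := ⨆ i, Kabs (Fintype.card F) (coeffT F i f)

/-- The twist `f ↦ f⁽¹⁾`: the coefficientwise `q`-power Frobenius. -/
def twist (f : TS F) : TS F := PowerSeries.mk fun i => coeffT F i f ^ Fintype.card F

/-- The iterated twist `f ↦ f⁽ᵏ⁾`. -/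
def twistIter (k : ℕ) (f : TS F) : TS F := (twist F)^[k] f

/-- The variable `t` of the Tate algebra. -/
def tt : TS F := PowerSeries.X

/-- `θ`, viewed as a constant of `K∞⟨t⟩`. -/
def th : TS F := PowerSeries.C (R := Kinf F) (theta F)

/-- The embedding `𝔽[θ] → K∞` sending the polynomial variable to `θ`. -/
def polyK : Polynomial F →+* Kinf F :=
  Polynomial.eval₂RingHom (HahnSeries.C : F →+* Kinf F) (theta F)

/-- The embedding `𝔽[θ][t] → K∞⟨t⟩`: the outer variable goes to `t`,
the inner variable goes to `θ`. -/
def polyT : Polynomial (Polynomial F) →+* TS F :=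
  Polynomial.eval₂RingHom ((PowerSeries.C (R := Kinf F)).comp (polyK F)) PowerSeries.X

/-- The subring `𝔽[θ,t] ⊆ K∞⟨t⟩`. -/
def PolyTT : Set (TS F) := Set.range (polyT F)

/-- The subset of `𝔽[θ,t]` of elements of `θ`-degree `< n`. -/
def PolyDegLt (n : ℕ) : Set (TS F) :=
  {f | ∃ P : Polynomial (Polynomial F), (∀ i, (P.coeff i).degree < (n : ℕ)) ∧ f = polyT F P}

/-- The action of `𝔽[t]` on `K∞⟨t⟩`: `a • f` is `actT a * f`. -/
def actT : Polynomial F →+* TS F :=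
  Polynomial.eval₂RingHom ((PowerSeries.C (R := Kinf F)).comp (HahnSeries.C : F →+* Kinf F))
    PowerSeries.X

/-- Convergence in `K∞⟨t⟩` with respect to the Gauss norm:
`L` is the limit of the sequence `s`. -/
def TT (s : ℕ → TS F) (L : TS F) : Prop :=
  Tendsto (fun N => gnorm F (L - s N)) atTop (nhds 0)

/-- Convergence in `K∞`: `L` is the limit of the sequence `s`. -/
def KT (q : ℕ) (s : ℕ → Kinf F) (L : Kinf F) : Prop :=
  Tendsto (fun N => Kabs q (L - s N)) atTop (nhds 0)

/-- Partial products defining `ν_n = (−θ)^{−h} ∏_{j≥0} (1 − t·θ^{−qʲ})ⁿ`,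
where `n = h(q−1) + δ`. -/
def nuPartial (n h N : ℕ) : TS F :=
  PowerSeries.C (R := Kinf F) ((-theta F)⁻¹ ^ h) *
    ∏ j ∈ Finset.range N,
      (1 - tt F * PowerSeries.C (R := Kinf F) ((theta F)⁻¹ ^ Fintype.card F ^ j)) ^ n

/-- Partial products defining `ω_n = (−θ)^m ∏_{i≥0} (1 − t·θ^{−qⁱ})^{−n}`,
where `n = m(q−1)`; `ω_n` is the `n`-th power of the Anderson–Thakur function. -/
def omegaPartial (n m N : ℕ) : TS F :=
  PowerSeries.C (R := Kinf F) ((-theta F) ^ m) *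
    ∏ i ∈ Finset.range N,
      ((1 - tt F * PowerSeries.C (R := Kinf F) ((theta F)⁻¹ ^ Fintype.card F ^ i)) ^ n)⁻¹

/-- Partial sums defining `ξ_e = ∑_{k≥0} e⁽ᵏ⁾ ∏_{i=0}^{k} (t−θ^{qⁱ})^{−n}`. -/
def xiPartial (n : ℕ) (e : TS F) (N : ℕ) : TS F :=
  ∑ k ∈ Finset.range N, twistIter F k e *
    (∏ i ∈ Finset.range (k + 1),
      (tt F - PowerSeries.C (R := Kinf F) (theta F ^ Fintype.card F ^ i)) ^ n)⁻¹

/-- Partial sums defining `s_h = h + ∑_{i≥1} h⁽ⁱ⁾ ∏_{j=0}^{i−1} (t−θ^{qʲ})^{−n}`. -/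
def sPartial (n : ℕ) (h : TS F) (N : ℕ) : TS F :=
  ∑ i ∈ Finset.range N, twistIter F i h *
    (∏ j ∈ Finset.range i,
      (tt F - PowerSeries.C (R := Kinf F) (theta F ^ Fintype.card F ^ j)) ^ n)⁻¹

/-- The map `β : f ↦ f − (t−θ)ⁿ f⁽¹⁾`. -/
def beta (n : ℕ) (f : TS F) : TS F := f - (tt F - th F) ^ n * twist F f

/-- The set of integral extension representatives
`X_n = {ξ ∈ K∞⟨t⟩ : (t−θ)ⁿ ξ − ξ⁽¹⁾ ∈ 𝔽[θ,t]}`. -/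
def Xset (n : ℕ) : Set (TS F) :=
  {ξ | IsTate F ξ ∧ (tt F - th F) ^ n * ξ - twist F ξ ∈ PolyTT F}

set_option linter.unusedSectionVars false

variable {F}

/-- `KLe e x` : all coefficients of `x` below `e` vanish (i.e. `|x| ≤ q^(-e)`). -/
def KLe (e : ℤ) (x : Kinf F) : Prop := ∀ j < e, x.coeff j = 0

lemma KLe_iff {e : ℤ} {x : Kinf F} : KLe e x ↔ x = 0 ∨ e ≤ x.order := by
  constructor
  · intro h
    rcases eq_or_ne x 0 with rfl | hx
    · exact Or.inl rfl
    · refine Or.inr ?_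
      by_contra hlt
      exact HahnSeries.coeff_order_eq_zero.not.2 hx (h _ (lt_of_not_ge hlt))
  · rintro (rfl | h) j hj
    · rfl
    · exact HahnSeries.coeff_eq_zero_of_lt_order (lt_of_lt_of_le hj h)

lemma KLe_zero (e : ℤ) : KLe e (0 : Kinf F) := fun _ _ => rfl

lemma KLe.mono {e e' : ℤ} {x : Kinf F} (h : KLe e x) (he : e' ≤ e) : KLe e' x :=
  fun j hj => h j (lt_of_lt_of_le hj he)

lemma KLe.add {e : ℤ} {x y : Kinf F} (hx : KLe e x) (hy : KLe e y) : KLe e (x + y) :=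
  fun j hj => by rw [HahnSeries.coeff_add, hx j hj, hy j hj, add_zero]

lemma KLe.neg {e : ℤ} {x : Kinf F} (hx : KLe e x) : KLe e (-x) :=
  fun j hj => by rw [HahnSeries.coeff_neg, hx j hj, neg_zero]

lemma KLe.sub {e : ℤ} {x y : Kinf F} (hx : KLe e x) (hy : KLe e y) : KLe e (x - y) := by
  rw [sub_eq_add_neg]; exact hx.add hy.neg

lemma KLe.mul {e f : ℤ} {x y : Kinf F} (hx : KLe e x) (hy : KLe f y) :
    KLe (e + f) (x * y) := by
  rcases eq_or_ne x 0 with rfl | hx0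
  · rw [zero_mul]; exact KLe_zero _
  rcases eq_or_ne y 0 with rfl | hy0
  · rw [mul_zero]; exact KLe_zero _
  rcases KLe_iff.1 hx with rfl | hex
  · exact absurd rfl hx0
  rcases KLe_iff.1 hy with rfl | hey
  · exact absurd rfl hy0
  refine KLe_iff.2 (Or.inr ?_)
  rw [HahnSeries.order_mul hx0 hy0]
  exact add_le_add hex hey

lemma KLe.pow {e : ℤ} {x : Kinf F} (hx : KLe e x) (n : ℕ) : KLe ((n : ℤ) * e) (x ^ n) := by
  induction n with
  | zero => simpa using (KLe_iff.2 (Or.inr (by simp)) : KLe 0 (1 : Kinf F))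
  | succ n ih =>
    have h2 := ih.mul hx
    rw [← pow_succ] at h2
    exact h2.mono (by push_cast; ring_nf; exact le_refl _)

lemma KLe_sum {e : ℤ} {α : Type*} {s : Finset α} {g : α → Kinf F}
    (h : ∀ a ∈ s, KLe e (g a)) : KLe e (∑ a ∈ s, g a) := by
  classical
  induction s using Finset.induction_on with
  | empty => simpa using KLe_zero e
  | insert _ _ hns ih =>
    rw [Finset.sum_insert hns]
    exact (h _ (Finset.mem_insert_self _ _)).add
      (ih fun a ha => h a (Finset.mem_insert_of_mem ha))


section Zpow

variable {q : ℕ} (hq : 1 < q)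

include hq in
lemma qne0 : (q : ℝ≥0∞) ≠ 0 := Nat.cast_ne_zero.2 (by omega)

lemma qnetop : (q : ℝ≥0∞) ≠ ⊤ := ENNReal.natCast_ne_top q

include hq in
lemma one_lt_qE : (1 : ℝ≥0∞) < q := by exact_mod_cast hq

include hq in
lemma zpow_le_zpow_right {a b : ℤ} (h : a ≤ b) : (q : ℝ≥0∞) ^ a ≤ (q : ℝ≥0∞) ^ b :=
  ENNReal.zpow_le_of_le (le_of_lt (one_lt_qE hq)) h

include hq in
lemma zpow_lt_zpow_right {a b : ℤ} (h : a < b) : (q : ℝ≥0∞) ^ a < (q : ℝ≥0∞) ^ b := by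
  have h1 : (q : ℝ≥0∞) ^ a < (q : ℝ≥0∞) ^ a * q := by
    have := ENNReal.mul_lt_mul_right (a := (q : ℝ≥0∞) ^ a)
      (ENNReal.zpow_pos (qne0 hq) (qnetop) a).ne'
      (ENNReal.zpow_lt_top (qne0 hq) (qnetop) a).ne (one_lt_qE hq)
    simpa using this
  have h2 : (q : ℝ≥0∞) ^ a * q = (q : ℝ≥0∞) ^ (a + 1) := by
    rw [ENNReal.zpow_add (qne0 hq) qnetop a 1, zpow_one]
  exact lt_of_lt_of_le (h2 ▸ h1) (zpow_le_zpow_right hq (by omega))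

end Zpow

section KabsLemmas

variable {q : ℕ} (hq : 1 < q)

lemma Kabs_zero : Kabs q (0 : Kinf F) = 0 := if_pos rfl

lemma Kabs_of_ne {x : Kinf F} (hx : x ≠ 0) : Kabs q x = (q : ℝ≥0∞) ^ (-x.order) := if_neg hx

include hq in
lemma Kabs_le_zpow_iff {e : ℤ} {x : Kinf F} :
    Kabs q x ≤ (q : ℝ≥0∞) ^ (-e) ↔ KLe e x := by
  rcases eq_or_ne x 0 with rfl | hx
  · simp [Kabs_zero, KLe_zero]
  rw [Kabs_of_ne hx, KLe_iff]
  constructor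
  · intro h
    refine Or.inr ?_
    by_contra hlt
    exact absurd h (not_le_of_gt (zpow_lt_zpow_right hq (by omega)))
  · rintro (rfl | h)
    · exact absurd rfl hx
    · exact zpow_le_zpow_right hq (by omega)

include hq in
lemma KLe_of_Kabs_lt {e : ℤ} {x : Kinf F} (h : Kabs q x < (q : ℝ≥0∞) ^ (-e)) :
    KLe (e + 1) x := by
  rcases eq_or_ne x 0 with rfl | hx
  · exact KLe_zero _
  rw [Kabs_of_ne hx] at h
  refine KLe_iff.2 (Or.inr ?_)
  by_contra hlt
  exact absurd h (not_lt_of_ge (zpow_le_zpow_right hq (by omega)))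

include hq in
lemma Kabs_mul (x y : Kinf F) : Kabs q (x * y) = Kabs q x * Kabs q y := by
  rcases eq_or_ne x 0 with rfl | hx
  · simp [Kabs_zero]
  rcases eq_or_ne y 0 with rfl | hy
  · simp [Kabs_zero]
  rw [Kabs_of_ne hx, Kabs_of_ne hy, Kabs_of_ne (mul_ne_zero hx hy),
    HahnSeries.order_mul hx hy, neg_add, ENNReal.zpow_add (qne0 hq) (ENNReal.natCast_ne_top q)]

include hq in
lemma Kabs_pow (x : Kinf F) (n : ℕ) : Kabs q (x ^ n) = Kabs q x ^ n := by
  induction n with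
  | zero => simp [Kabs_of_ne (one_ne_zero : (1 : Kinf F) ≠ 0)]
  | succ n ih => rw [pow_succ, Kabs_mul hq, ih, pow_succ]

lemma Kabs_neg (x : Kinf F) : Kabs q (-x) = Kabs q x := by
  rcases eq_or_ne x 0 with rfl | hx
  · simp
  rw [Kabs_of_ne (neg_ne_zero.2 hx), Kabs_of_ne hx, HahnSeries.order_neg]

include hq in
lemma Kabs_add_le (x y : Kinf F) : Kabs q (x + y) ≤ max (Kabs q x) (Kabs q y) := by
  rcases eq_or_ne x 0 with rfl | hx
  · simp [Kabs_zero]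
  rcases eq_or_ne y 0 with rfl | hy
  · simp [Kabs_zero]
  rcases eq_or_ne (x + y) 0 with h0 | h0
  · simp [h0, Kabs_zero]
  rw [Kabs_of_ne h0, Kabs_of_ne hx, Kabs_of_ne hy]
  have := HahnSeries.min_order_le_order_add h0
  rcases min_le_iff.1 this with h | h
  · exact le_max_of_le_left (zpow_le_zpow_right hq (by omega))
  · exact le_max_of_le_right (zpow_le_zpow_right hq (by omega))

include hq in
lemma Kabs_sub_le (x y : Kinf F) : Kabs q (x - y) ≤ max (Kabs q x) (Kabs q y) := by
  rw [sub_eq_add_neg]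
  simpa [Kabs_neg] using Kabs_add_le (q := q) hq x (-y)

end KabsLemmas




section TateLemmas

/-- `GLe e f` : every `t`-coefficient of `f` has `|·| ≤ q^(-e)`. -/
def GLe (e : ℤ) (f : TS F) : Prop := ∀ i, KLe e (coeffT F i f)

lemma GLe_zero (e : ℤ) : GLe e (0 : TS F) := fun i => by
  simpa [coeffT] using KLe_zero (F := F) e

lemma GLe.mono {e e' : ℤ} {f : TS F} (h : GLe e f) (he : e' ≤ e) : GLe e' f :=
  fun i => (h i).mono he

lemma GLe.sub {e : ℤ} {f g : TS F} (hf : GLe e f) (hg : GLe e g) : GLe e (f - g) :=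
  fun i => by simpa [coeffT, map_sub] using (hf i).sub (hg i)

lemma GLe.add {e : ℤ} {f g : TS F} (hf : GLe e f) (hg : GLe e g) : GLe e (f + g) :=
  fun i => by simpa [coeffT, map_add] using (hf i).add (hg i)

lemma GLe.mul {e e' : ℤ} {f g : TS F} (hf : GLe e f) (hg : GLe e' g) :
    GLe (e + e') (f * g) := by
  intro i
  have : coeffT F i (f * g)
      = ∑ p ∈ Finset.HasAntidiagonal.antidiagonal i, coeffT F p.1 f * coeffT F p.2 g := by
    simpa [coeffT] using PowerSeries.coeff_mul i f g
  rw [this]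
  exact KLe_sum fun p _ => (hf p.1).mul (hg p.2)

lemma GLe.pow {e : ℤ} {f : TS F} (hf : GLe e f) (n : ℕ) : GLe ((n : ℤ) * e) (f ^ n) := by
  induction n with
  | zero =>
    intro i j hj
    have hc : coeffT F i ((f : TS F) ^ 0) = if i = 0 then 1 else 0 := by
      simpa [coeffT] using PowerSeries.coeff_one i (R := Kinf F)
    simp only [Nat.cast_zero, zero_mul] at hj
    rw [hc]
    rcases eq_or_ne i 0 with rfl | hi
    · simp [HahnSeries.coeff_one, show ¬ j = 0 by omega]
    · simp [hi]
  | succ n ih =>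
    have h2 := ih.mul hf
    rw [← pow_succ] at h2
    exact h2.mono (by push_cast; ring_nf; exact le_refl _)

lemma GLe_C_mul {e e' : ℤ} {c : Kinf F} (hc : KLe e c) {f : TS F} (hf : GLe e' f) :
    GLe (e + e') (PowerSeries.C (R := Kinf F) c * f) := by
  intro i
  have : coeffT F i (PowerSeries.C (R := Kinf F) c * f) = c * coeffT F i f := by
    simpa [coeffT] using PowerSeries.coeff_C_mul i f c
  rw [this]
  exact hc.mul (hf i)

lemma TS_eq_zero_of_forall_GLe {f : TS F} (h : ∀ e : ℤ, GLe e f) : f = 0 := by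
  refine PowerSeries.ext fun i => ?_
  have h2 : ∀ m : ℤ, (coeffT F i f).coeff m = 0 := fun m => h (m + 1) i m (by omega)
  have h3 : coeffT F i f = 0 := HahnSeries.ext (funext fun m => by simpa using h2 m)
  simpa [coeffT] using h3

variable (F) in
lemma one_lt_cardF : 1 < Fintype.card F := Fintype.one_lt_card

lemma gnorm_le_zpow_iff {e : ℤ} {f : TS F} :
    gnorm F f ≤ (Fintype.card F : ℝ≥0∞) ^ (-e) ↔ GLe e f := by
  rw [gnorm, iSup_le_iff]
  exact forall_congr' fun i => Kabs_le_zpow_iff (one_lt_cardF F)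

lemma GLe_of_gnorm_lt_one {f : TS F} (h : gnorm F f < 1) : GLe 1 f := by
  intro i
  have hle : Kabs (Fintype.card F) (coeffT F i f) ≤ gnorm F f := by
    rw [gnorm]; exact le_iSup (fun i => Kabs (Fintype.card F) (coeffT F i f)) i
  have h1 : Kabs (Fintype.card F) (coeffT F i f) < (Fintype.card F : ℝ≥0∞) ^ (-(0 : ℤ)) := by
    simpa using lt_of_le_of_lt hle h
  simpa using KLe_of_Kabs_lt (one_lt_cardF F) h1

lemma gnorm_lt_one_of_GLe_one {f : TS F} (h : GLe 1 f) : gnorm F f < 1 := by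
  refine lt_of_le_of_lt (gnorm_le_zpow_iff.2 h) ?_
  have := zpow_lt_zpow_right (q := Fintype.card F) (one_lt_cardF F) (a := -1) (b := 0)
    (by omega)
  simpa using this

variable (F) in
lemma exists_frob : ∃ φ : Kinf F →+* Kinf F, ∀ x : Kinf F, φ x = x ^ Fintype.card F := by
  obtain ⟨p, hchar⟩ := CharP.exists F
  haveI : CharP F p := hchar
  obtain ⟨s, hp, hcard⟩ := FiniteField.card F p
  haveI : Fact p.Prime := ⟨hp⟩
  haveI : CharP (Kinf F) p :=
    charP_of_injective_ringHom (HahnSeries.C_injective (Γ := ℤ) (R := F)) p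
  refine ⟨iterateFrobenius (Kinf F) p s, fun x => ?_⟩
  rw [iterateFrobenius_def, hcard]

lemma twist_eq_map {φ : Kinf F →+* Kinf F} (hφ : ∀ x : Kinf F, φ x = x ^ Fintype.card F)
    (f : TS F) : twist F f = PowerSeries.map φ f := by
  ext i
  rw [twist, PowerSeries.coeff_mk, PowerSeries.coeff_map, hφ]
  rfl

lemma twist_mul (f g : TS F) : twist F (f * g) = twist F f * twist F g := by
  obtain ⟨φ, hφ⟩ := exists_frob F
  rw [twist_eq_map hφ, twist_eq_map hφ, twist_eq_map hφ, map_mul]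

lemma twist_sub (f g : TS F) : twist F (f - g) = twist F f - twist F g := by
  obtain ⟨φ, hφ⟩ := exists_frob F
  rw [twist_eq_map hφ, twist_eq_map hφ, twist_eq_map hφ, map_sub]

lemma twist_one : twist F (1 : TS F) = 1 := by
  obtain ⟨φ, hφ⟩ := exists_frob F
  rw [twist_eq_map hφ, map_one]

lemma twist_C (a : Kinf F) :
    twist F (PowerSeries.C (R := Kinf F) a) = PowerSeries.C (R := Kinf F) (a ^ Fintype.card F) := by
  obtain ⟨φ, hφ⟩ := exists_frob F
  rw [twist_eq_map hφ, PowerSeries.map_C, hφ]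

lemma twist_X : twist F (tt F) = tt F := by
  obtain ⟨φ, hφ⟩ := exists_frob F
  rw [tt, twist_eq_map hφ, PowerSeries.map_X]

lemma twist_coeff (f : TS F) (i : ℕ) :
    coeffT F i (twist F f) = coeffT F i f ^ Fintype.card F := by
  simp [twist, coeffT]

end TateLemmas



section NuIdentity

lemma theta_ne_zero : theta F ≠ 0 := HahnSeries.single_ne_zero one_ne_zero

lemma order_theta : (theta F).order = -1 := HahnSeries.order_single one_ne_zero

lemma KLe_neg_theta : KLe (-1) (-theta F) := by
  refine KLe_iff.2 (Or.inr ?_)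
  rw [HahnSeries.order_neg, order_theta]

lemma KLe_neg_theta_pow (δ : ℕ) : KLe (-(δ : ℤ)) ((-theta F) ^ δ) := by
  have := KLe_neg_theta.pow (F := F) δ
  simpa using this

/-- The factors `1 - t·θ^{-q^j}`. -/
def uu (j : ℕ) : TS F := 1 - tt F * PowerSeries.C (R := Kinf F) ((theta F)⁻¹ ^ Fintype.card F ^ j)

lemma twist_uu (j : ℕ) : twist F (uu (F := F) j) = uu (F := F) (j + 1) := by
  rw [uu, twist_sub, twist_one, twist_mul, twist_X, twist_C, uu]
  rw [← pow_mul, ← pow_succ]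

lemma tt_sub_th : tt F - th F = PowerSeries.C (R := Kinf F) (-theta F) * uu (F := F) 0 := by
  have h1 : (-theta F) * (theta F)⁻¹ ^ Fintype.card F ^ 0 = -1 := by
    rw [pow_zero, pow_one]
    field_simp
    rw [div_self theta_ne_zero]
  rw [uu, mul_sub, mul_one, mul_left_comm, ← map_mul, h1]
  simp only [map_neg, map_one, th]
  ring

lemma nuPartial_eq (n h N : ℕ) : nuPartial F n h N
    = PowerSeries.C (R := Kinf F) ((-theta F)⁻¹ ^ h) * ∏ j ∈ Finset.range N, uu (F := F) j ^ n := by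
  rw [nuPartial]
  rfl

lemma stepA (n h δ N : ℕ) (hdiv : n = h * (Fintype.card F - 1) + δ) :
    (tt F - th F) ^ n * twist F (nuPartial F n h N)
      = PowerSeries.C (R := Kinf F) ((-theta F) ^ δ) * nuPartial F n h (N + 1) := by
  obtain ⟨φ, hφ⟩ := exists_frob F
  have hmap_u : ∀ j, PowerSeries.map φ (uu (F := F) j) = uu (F := F) (j + 1) := fun j => by
    rw [← twist_eq_map hφ, twist_uu]
  have hq1 : 1 < Fintype.card F := one_lt_cardF F
  set q := Fintype.card F with hqdef
  have hx : (-theta F) ≠ 0 := neg_ne_zero.2 theta_ne_zero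
  -- scalar identity
  have hscal : (-theta F) ^ n * ((-theta F)⁻¹ ^ h) ^ q
      = (-theta F) ^ δ * (-theta F)⁻¹ ^ h := by
    rw [inv_pow, inv_pow, ← pow_mul]
    rw [inv_eq_one_div, inv_eq_one_div, mul_one_div, mul_one_div,
      div_eq_div_iff (pow_ne_zero _ hx) (pow_ne_zero _ hx), ← pow_add, ← pow_add]
    congr 1
    have hq' : q - 1 + 1 = q := Nat.succ_pred_eq_of_pos (lt_trans zero_lt_one hq1)
    calc n + h = h * (q - 1) + δ + h := by rw [hdiv]
      _ = h * (q - 1 + 1) + δ := by ring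
      _ = δ + h * q := by rw [hq']; ring
  have hC : (PowerSeries.C (R := Kinf F)) ((-theta F) ^ n)
        * (PowerSeries.C (R := Kinf F)) (((-theta F)⁻¹ ^ h) ^ q)
      = (PowerSeries.C (R := Kinf F)) ((-theta F) ^ δ)
        * (PowerSeries.C (R := Kinf F)) ((-theta F)⁻¹ ^ h) := by
    rw [← map_mul, ← map_mul, hscal]
  rw [nuPartial_eq, nuPartial_eq, twist_eq_map hφ, map_mul, PowerSeries.map_C, hφ]
  rw [map_prod]
  have hfac : ∀ j ∈ Finset.range N,
      PowerSeries.map φ (uu (F := F) j ^ n) = uu (F := F) (j + 1) ^ n := fun j _ => by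
    rw [map_pow, hmap_u]
  rw [Finset.prod_congr rfl hfac, tt_sub_th, mul_pow, ← map_pow, Finset.prod_range_succ']
  linear_combination ((∏ j ∈ Finset.range N, uu (F := F) (j + 1) ^ n)
    * uu (F := F) 0 ^ n) * hC

lemma nu_identity (n h δ : ℕ) (hdiv : n = h * (Fintype.card F - 1) + δ)
    (ν : TS F) (hνc : TT F (nuPartial F n h) ν) :
    (tt F - th F) ^ n * twist F ν = PowerSeries.C (R := Kinf F) ((-theta F) ^ δ) * ν := by
  have hq1 : 1 < Fintype.card F := one_lt_cardF F
  set P : ℕ → TS F := nuPartial F n h with hP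
  have hν' : Tendsto (fun N => gnorm F (ν - P N)) atTop (nhds 0) := hνc
  have hconv : ∀ M : ℤ, ∃ N : ℕ, GLe M (ν - P N) ∧ GLe M (ν - P (N + 1)) := by
    intro M
    have h0 : (0 : ℝ≥0∞) < (Fintype.card F : ℝ≥0∞) ^ (-M) :=
      ENNReal.zpow_pos (qne0 hq1) qnetop _
    have h2 := (ENNReal.tendsto_nhds_zero.1 hν') _ h0
    rw [eventually_atTop] at h2
    obtain ⟨N0, hN0⟩ := h2
    exact ⟨N0, gnorm_le_zpow_iff.1 (hN0 N0 le_rfl),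
      gnorm_le_zpow_iff.1 (hN0 (N0 + 1) (by omega))⟩
  set c : Kinf F := (-theta F) ^ δ with hc
  set E : TS F := PowerSeries.C (R := Kinf F) c * ν - (tt F - th F) ^ n * twist F ν with hE
  have hGtth : GLe (-(n : ℤ)) ((tt F - th F) ^ n) := by
    have h1 : GLe (-1) (tt F - th F) := by
      intro i
      have : coeffT F i (tt F - th F)
          = (if i = 1 then (1 : Kinf F) else 0) - (if i = 0 then theta F else 0) := by
        simp [coeffT, tt, th, PowerSeries.coeff_X, PowerSeries.coeff_C]
      rcases eq_or_ne i 1 with rfl | h1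
      · rw [this, if_pos rfl, if_neg (by norm_num : (1 : ℕ) ≠ 0), sub_zero]
        exact KLe_iff.2 (Or.inr (by simp))
      rcases eq_or_ne i 0 with rfl | h0
      · rw [this, if_neg h1, if_pos rfl, zero_sub]
        exact KLe_neg_theta
      · rw [this, if_neg h1, if_neg h0, sub_zero]
        exact KLe_zero _
    have := h1.pow n
    exact this.mono (by push_cast; omega)
  have hGc : GLe (-(δ : ℤ)) (PowerSeries.C (R := Kinf F) c) := by
    intro i
    have : coeffT F i (PowerSeries.C (R := Kinf F) c) = if i = 0 then c else 0 := by
      simp [coeffT, PowerSeries.coeff_C]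
    rw [this]
    rcases eq_or_ne i 0 with rfl | h0
    · simpa using KLe_neg_theta_pow (F := F) δ
    · simp only [if_neg h0]; exact KLe_zero _
  have hEbound : ∀ e : ℤ, GLe e E := by
    intro e
    set M : ℤ := (e.natAbs : ℤ) + (δ : ℤ) + (n : ℤ) with hM
    obtain ⟨N, hd1, hd2⟩ := hconv M
    have hEeq : E = PowerSeries.C (R := Kinf F) c * (ν - P (N + 1))
        - (tt F - th F) ^ n * twist F (ν - P N) := by
      rw [twist_sub, hE]
      have hsA := stepA n h δ N hdiv
      rw [← hP] at hsA
      rw [← hc] at hsA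
      linear_combination -hsA
    have hb1 : GLe (-(δ : ℤ) + M) (PowerSeries.C (R := Kinf F) c * (ν - P (N + 1))) :=
      hGc.mul hd2
    have hbt : GLe ((Fintype.card F : ℤ) * M) (twist F (ν - P N)) := by
      intro i
      rw [twist_coeff]
      exact (hd1 i).pow _
    have hb2 : GLe (-(n : ℤ) + (Fintype.card F : ℤ) * M)
        ((tt F - th F) ^ n * twist F (ν - P N)) := hGtth.mul hbt
    rw [hEeq]
    have hM0 : 0 ≤ M := by positivity
    have h2M : 2 * M ≤ (Fintype.card F : ℤ) * M := by
      have : (2 : ℤ) ≤ (Fintype.card F : ℤ) := by exact_mod_cast hq1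
      exact mul_le_mul_of_nonneg_right this hM0
    have habs : e ≤ (e.natAbs : ℤ) := Int.le_natAbs
    refine (hb1.mono ?_).sub (hb2.mono ?_)
    · omega
    · have : e ≤ -(n : ℤ) + 2 * M := by omega
      omega
  have hE0 : E = 0 := TS_eq_zero_of_forall_GLe hEbound
  have := sub_eq_zero.1 hE0
  exact this.symm

end NuIdentity



section Solve

lemma frob_solve (δ : ℕ) (hδ2 : (δ : ℤ) + 2 ≤ (Fintype.card F : ℤ)) (a : Kinf F)
    (ha : KLe 1 a) :
    ∃ x : Kinf F, KLe 1 x ∧ Kabs (Fintype.card F) x ≤ Kabs (Fintype.card F) a ∧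
      x - (-theta F) ^ δ * x ^ Fintype.card F = a := by
  have hq1 : 1 < Fintype.card F := one_lt_cardF F
  set q := Fintype.card F with hqdef
  set c : Kinf F := (-theta F) ^ δ with hc
  rcases eq_or_ne a 0 with rfl | ha0
  · exact ⟨0, KLe_zero _, le_rfl, by simp [zero_pow (show q ≠ 0 by omega)]⟩
  set e : ℤ := a.order with he
  have he1 : 1 ≤ e := (KLe_iff.1 ha).resolve_left ha0
  have hKc : KLe (-(δ : ℤ)) c := KLe_neg_theta_pow δ
  have hKa : KLe e a := KLe_iff.2 (Or.inr le_rfl)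
  -- Frobenius additivity
  obtain ⟨p, hchar⟩ := CharP.exists F
  haveI : CharP F p := hchar
  obtain ⟨s, hp, hcard⟩ := FiniteField.card F p
  haveI : Fact p.Prime := ⟨hp⟩
  haveI : CharP (Kinf F) p :=
    charP_of_injective_ringHom (HahnSeries.C_injective (Γ := ℤ) (R := F)) p
  have hfrob : ∀ u v : Kinf F, (u - v) ^ q = u ^ q - v ^ q := by
    intro u v
    rw [hqdef, hcard]
    exact sub_pow_char_pow u v (s : ℕ)
  -- the iteration
  set T : Kinf F → Kinf F := fun y => a + c * y ^ q with hT
  set seq : ℕ → Kinf F := fun k => T^[k] 0 with hseq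
  have hseq_succ : ∀ k, seq (k + 1) = a + c * seq k ^ q := fun k => by
    show T^[k + 1] 0 = a + c * (T^[k] 0) ^ q
    rw [Function.iterate_succ_apply']
  have hmono_aux : ∀ m : ℤ, 1 ≤ m → (m : ℤ) + δ + 1 ≤ (q : ℤ) * m := by
    intro m hm
    have h2 : ((q : ℤ) - 1) * 1 ≤ ((q : ℤ) - 1) * m :=
      mul_le_mul_of_nonneg_left hm (by omega)
    nlinarith
  have h1 : ∀ k, KLe e (seq k) := by
    intro k
    induction k with
    | zero => simpa [hseq] using KLe_zero (F := F) e
    | succ k ih =>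
      rw [hseq_succ]
      refine hKa.add ((hKc.mul (ih.pow q)).mono ?_)
      have := hmono_aux e he1
      omega
  have h2 : ∀ k : ℕ, KLe (e + (k : ℤ)) (seq (k + 1) - seq k) := by
    intro k
    induction k with
    | zero =>
      have : seq 1 - seq 0 = a := by
        rw [hseq_succ, hseq]
        simp [zero_pow (show q ≠ 0 by omega)]
      rw [this]
      simpa using hKa
    | succ k ih =>
      have hdd : seq (k + 2) - seq (k + 1) = c * (seq (k + 1) - seq k) ^ q := by
        rw [hfrob, hseq_succ, hseq_succ]
        ring
      rw [hdd]
      refine (hKc.mul (ih.pow q)).mono ?_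
      have := hmono_aux (e + k) (by omega)
      push_cast
      omega
  have h3 : ∀ (k d : ℕ), KLe (e + (k : ℤ)) (seq (k + d) - seq k) := by
    intro k d
    induction d with
    | zero => simpa using KLe_zero (F := F) (e + k)
    | succ d ih =>
      have : seq (k + (d + 1)) - seq k
          = (seq ((k + d) + 1) - seq (k + d)) + (seq (k + d) - seq k) := by
        have : k + (d + 1) = (k + d) + 1 := by omega
        rw [this]; ring
      rw [this]
      exact ((h2 (k + d)).mono (by omega)).add ih
  -- limit coefficients
  set w : ℤ → F := fun m => (seq ((m - e + 1).toNat)).coeff m with hw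
  have hstab : ∀ (m : ℤ) (k : ℕ), m < e + k → (seq k).coeff m = w m := by
    intro m k hm
    have hKm : m < e + (((m - e + 1).toNat : ℕ) : ℤ) := by
      have := Int.self_le_toNat (m - e + 1)
      omega
    rcases le_total k ((m - e + 1).toNat) with hkK | hkK
    · have h4 := h3 k ((m - e + 1).toNat - k) m hm
      rw [show k + ((m - e + 1).toNat - k) = (m - e + 1).toNat by omega,
        HahnSeries.coeff_sub] at h4
      exact (sub_eq_zero.1 h4).symm
    · have h4 := h3 ((m - e + 1).toNat) (k - (m - e + 1).toNat) m hKm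
      rw [show (m - e + 1).toNat + (k - (m - e + 1).toNat) = k by omega,
        HahnSeries.coeff_sub] at h4
      exact sub_eq_zero.1 h4
  have hsupp : ∀ m : ℤ, m < e → w m = 0 := by
    intro m hm
    rw [hw]
    exact h1 _ m hm
  have hpwo : (Function.support w).IsPWO := by
    have hbdd : BddBelow (Function.support w) := by
      refine ⟨e, fun m hm => ?_⟩
      by_contra hlt
      exact hm (hsupp m (by omega))
    exact Set.IsWF.isPWO (BddBelow.wellFoundedOn_lt hbdd)
  set x : Kinf F := ⟨w, hpwo⟩ with hx
  have hxc : ∀ m, x.coeff m = w m := fun m => rfl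
  have hxK : KLe e x := fun m hm => hsupp m hm
  have hdiff : ∀ k : ℕ, KLe (e + (k : ℤ)) (x - seq k) := by
    intro k m hm
    rw [HahnSeries.coeff_sub, hxc, ← hstab m k hm, sub_self]
  have hE0 : x - (a + c * x ^ q) = 0 := by
    refine HahnSeries.ext (funext fun m => ?_)
    have hEk : ∀ k : ℕ, x - (a + c * x ^ q)
        = (x - seq (k + 1)) - c * (x - seq k) ^ q := by
      intro k
      rw [hfrob, hseq_succ]
      ring
    set k : ℕ := (m - e + 1).toNat + δ + 1 with hk
    have hb1 : KLe (e + (k + 1)) (x - seq (k + 1)) := hdiff (k + 1)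
    have hb2 : KLe (-(δ : ℤ) + (q : ℤ) * (e + k)) (c * (x - seq k) ^ q) :=
      hKc.mul ((hdiff k).pow q)
    have hek1 : m + 1 ≤ e + k := by
      have := Int.self_le_toNat (m - e + 1)
      omega
    have hek2 : m + 1 ≤ -(δ : ℤ) + (q : ℤ) * (e + k) := by
      have h2ek : 2 * (e + k) ≤ (q : ℤ) * (e + k) := by
        have hq2 : (2 : ℤ) ≤ (q : ℤ) := by omega
        have hek0 : (0 : ℤ) ≤ e + k := by omega
        exact mul_le_mul_of_nonneg_right hq2 hek0
      have hdk : (δ : ℤ) + 1 ≤ (k : ℤ) := by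
        rw [hk]; push_cast; omega
      omega
    rw [hEk k]
    have hmono1 : m + 1 ≤ e + (((k + 1 : ℕ) : ℤ)) := by push_cast; omega
    have h0 := ((hb1.mono hmono1).sub (hb2.mono hek2)) m (by omega)
    simpa using h0
  have heq : x - c * x ^ q = a := by linear_combination hE0
  refine ⟨x, hxK.mono he1, ?_, heq⟩
  rw [Kabs_of_ne ha0, ← he]
  exact (Kabs_le_zpow_iff hq1).2 hxK

end Solve



section IsTateLemmas

lemma Kabs_ne_top {q : ℕ} (hq : 1 < q) (x : Kinf F) : Kabs q x ≠ ⊤ := by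
  rcases eq_or_ne x 0 with rfl | hx
  · simp [Kabs_zero]
  · rw [Kabs_of_ne hx]
    exact (ENNReal.zpow_lt_top (qne0 hq) qnetop _).ne

lemma IsTate_sub {f g : TS F} (hf : IsTate F f) (hg : IsTate F g) : IsTate F (f - g) := by
  have hq1 : 1 < Fintype.card F := one_lt_cardF F
  refine tendsto_of_tendsto_of_tendsto_of_le_of_le (g := fun _ => (0 : ℝ≥0∞))
    (h := fun i => max (Kabs (Fintype.card F) (coeffT F i f))
      (Kabs (Fintype.card F) (coeffT F i g)))
    tendsto_const_nhds (by simpa using Filter.Tendsto.max hf hg)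
    (fun i => zero_le) (fun i => ?_)
  have hco : coeffT F i (f - g) = coeffT F i f - coeffT F i g := by
    simp [coeffT]
  rw [hco]
  exact Kabs_sub_le hq1 _ _

lemma IsTate_C_mul (c : Kinf F) {f : TS F} (hf : IsTate F f) :
    IsTate F (PowerSeries.C (R := Kinf F) c * f) := by
  have hq1 : 1 < Fintype.card F := one_lt_cardF F
  have h2 : Tendsto (fun i => Kabs (Fintype.card F) c * Kabs (Fintype.card F) (coeffT F i f))
      atTop (nhds 0) := by
    have := ENNReal.Tendsto.const_mul (a := Kabs (Fintype.card F) c) hf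
      (Or.inr (Kabs_ne_top hq1 c))
    simpa using this
  refine h2.congr fun i => ?_
  have hco : coeffT F i (PowerSeries.C (R := Kinf F) c * f) = c * coeffT F i f := by
    simp [coeffT]
  rw [hco, Kabs_mul hq1]

lemma IsTate_twist {f : TS F} (hf : IsTate F f) : IsTate F (twist F f) := by
  have hq1 : 1 < Fintype.card F := one_lt_cardF F
  have h2 : Tendsto (fun i => Kabs (Fintype.card F) (coeffT F i f) ^ Fintype.card F)
      atTop (nhds 0) := by
    have hc := ((ENNReal.continuous_pow (Fintype.card F)).tendsto 0).comp hf
    simpa [Function.comp_def, zero_pow (show Fintype.card F ≠ 0 by omega)] using hc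
  refine h2.congr fun i => ?_
  rw [twist_coeff, Kabs_pow hq1]

end IsTateLemmas


/-- Let `n ≥ 0`, written `n = h(q−1) + δ` with `0 ≤ δ < q−1`.  For every
`f ∈ K∞⟨t⟩` one has `β(f·ν_n) = (f − (−θ)^δ f⁽¹⁾)·ν_n`; consequently `β` maps the
submodule `𝔪_∞⟨t⟩·ν_n` into itself and restricts to a bijection of `𝔪_∞⟨t⟩·ν_n` onto
itself. -/
theorem statement3 (q n h δ : ℕ) (hq : q = Fintype.card F)
    (hdiv : n = h * (q - 1) + δ) (hδ : δ < q - 1)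
    (ν : TS F) (hν : IsTate F ν) (hνc : TT F (nuPartial F n h) ν) :
    -- the twisting formula
    (∀ f : TS F, IsTate F f →
      beta F n (f * ν)
        = (f - PowerSeries.C (R := Kinf F) ((-theta F) ^ δ) * twist F f) * ν) ∧
    -- `β` maps `𝔪_∞⟨t⟩·ν_n` into itself
    (∀ g : TS F, IsTate F g → gnorm F g < 1 →
      ∃ g' : TS F, IsTate F g' ∧ gnorm F g' < 1 ∧ beta F n (g * ν) = g' * ν) ∧
    -- `β` is injective on `𝔪_∞⟨t⟩·ν_n`
    (∀ g g' : TS F, IsTate F g → gnorm F g < 1 → IsTate F g' → gnorm F g' < 1 →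
      beta F n (g * ν) = beta F n (g' * ν) → g * ν = g' * ν) ∧
    -- `β` is surjective onto `𝔪_∞⟨t⟩·ν_n`
    (∀ g : TS F, IsTate F g → gnorm F g < 1 →
      ∃ g' : TS F, IsTate F g' ∧ gnorm F g' < 1 ∧ beta F n (g' * ν) = g * ν) := by
  subst hq
  have hq1 : 1 < Fintype.card F := one_lt_cardF F
  have hid := nu_identity n h δ hdiv ν hνc
  have part1 : ∀ f : TS F, beta F n (f * ν)
      = (f - PowerSeries.C (R := Kinf F) ((-theta F) ^ δ) * twist F f) * ν := by
    intro f
    rw [beta, twist_mul]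
    linear_combination - twist F f * hid
  have hKc : KLe (-(δ : ℤ)) ((-theta F) ^ δ : Kinf F) := KLe_neg_theta_pow δ
  have hGtwist : ∀ {f : TS F}, GLe 1 f → GLe (Fintype.card F : ℤ) (twist F f) := by
    intro f hf i
    rw [twist_coeff]
    have := (hf i).pow (Fintype.card F)
    simpa using this
  have hGmap : ∀ {f : TS F}, GLe 1 f →
      GLe 1 (f - PowerSeries.C (R := Kinf F) ((-theta F) ^ δ) * twist F f) := by
    intro f hf
    exact hf.sub ((GLe_C_mul hKc (hGtwist hf)).mono (by omega))
  refine ⟨fun f _ => part1 f, ?_, ?_, ?_⟩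
  · -- β maps the submodule into itself
    intro g hg hg1
    exact ⟨g - PowerSeries.C (R := Kinf F) ((-theta F) ^ δ) * twist F g,
      IsTate_sub hg (IsTate_C_mul _ (IsTate_twist hg)),
      gnorm_lt_one_of_GLe_one (hGmap (GLe_of_gnorm_lt_one hg1)), part1 g⟩
  · -- injectivity
    intro g g' hg hg1 hgT' hg1' heq
    rcases eq_or_ne ν 0 with rfl | hν0
    · simp
    rw [part1 g, part1 g'] at heq
    have hcan := mul_right_cancel₀ hν0 heq
    -- Frobenius additivity on Kinf
    obtain ⟨p, hchar⟩ := CharP.exists F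
    haveI : CharP F p := hchar
    obtain ⟨s, hp, hcard⟩ := FiniteField.card F p
    haveI : Fact p.Prime := ⟨hp⟩
    haveI : CharP (Kinf F) p :=
      charP_of_injective_ringHom (HahnSeries.C_injective (Γ := ℤ) (R := F)) p
    have hfrob : ∀ u v : Kinf F, (u - v) ^ Fintype.card F = u ^ Fintype.card F
        - v ^ Fintype.card F := by
      intro u v
      rw [hcard]
      exact sub_pow_char_pow u v (s : ℕ)
    have hcne : ((-theta F) ^ δ : Kinf F) ≠ 0 := pow_ne_zero _ (neg_ne_zero.2 theta_ne_zero)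
    suffices hgg : g = g' by rw [hgg]
    refine PowerSeries.ext fun i => ?_
    have hcoeq := congrArg (PowerSeries.coeff (R := Kinf F) i) hcan
    have hrew : ∀ f : TS F, (PowerSeries.coeff (R := Kinf F) i)
        (PowerSeries.C (R := Kinf F) ((-theta F) ^ δ) * twist F f)
        = (-theta F) ^ δ * (coeffT F i f) ^ Fintype.card F := by
      intro f
      rw [PowerSeries.coeff_C_mul,
        show (PowerSeries.coeff (R := Kinf F) i) (twist F f) = coeffT F i (twist F f) from rfl,
        twist_coeff]
    simp only [map_sub] at hcoeq
    rw [hrew g, hrew g',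
      show (PowerSeries.coeff (R := Kinf F) i) g = coeffT F i g from rfl,
      show (PowerSeries.coeff (R := Kinf F) i) g' = coeffT F i g' from rfl] at hcoeq
    show coeffT F i g = coeffT F i g'
    set u := coeffT F i g with hu
    set v := coeffT F i g' with hv
    by_contra hne
    have hd0 : u - v ≠ 0 := sub_ne_zero.2 hne
    have hd : u - v = (-theta F) ^ δ * (u - v) ^ Fintype.card F := by
      linear_combination hcoeq - (-theta F) ^ δ * hfrob u v
    have hdK : KLe 1 (u - v) := (GLe_of_gnorm_lt_one hg1 i).sub (GLe_of_gnorm_lt_one hg1' i)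
    have hord : 1 ≤ (u - v).order := (KLe_iff.1 hdK).resolve_left hd0
    have hoc : ((-theta F) ^ δ : Kinf F).order = -(δ : ℤ) := by
      rw [HahnSeries.order_pow, HahnSeries.order_neg, order_theta]
      simp
    have horder := congrArg HahnSeries.order hd
    rw [HahnSeries.order_mul hcne (pow_ne_zero _ hd0), hoc, HahnSeries.order_pow] at horder
    rw [nsmul_eq_mul] at horder
    have hmul : ((Fintype.card F : ℤ) - 1) * 1 ≤ ((Fintype.card F : ℤ) - 1) * (u - v).order :=
      mul_le_mul_of_nonneg_left hord (by omega)
    have hexp : ((Fintype.card F : ℤ) - 1) * (u - v).order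
        = (Fintype.card F : ℤ) * (u - v).order - (u - v).order := by ring
    have hδ' : (δ : ℤ) + 1 ≤ (Fintype.card F : ℤ) - 1 := by omega
    linarith [horder, hmul, hexp, hδ']
  · -- surjectivity
    intro g hg hg1
    have hδ2 : (δ : ℤ) + 2 ≤ (Fintype.card F : ℤ) := by omega
    have hsol := fun i => frob_solve δ hδ2 (coeffT F i g) (GLe_of_gnorm_lt_one hg1 i)
    choose xs hx1 hx2 hx3 using hsol
    have hxsc : ∀ i, coeffT F i (PowerSeries.mk xs) = xs i := fun i => by simp [coeffT]
    refine ⟨PowerSeries.mk xs, ?_, ?_, ?_⟩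
    · have hg' : Tendsto (fun i => Kabs (Fintype.card F) (coeffT F i g)) atTop (nhds 0) := hg
      refine tendsto_of_tendsto_of_tendsto_of_le_of_le (g := fun _ => (0 : ℝ≥0∞))
        tendsto_const_nhds hg' (fun i => zero_le) (fun i => ?_)
      rw [hxsc i]
      exact hx2 i
    · refine gnorm_lt_one_of_GLe_one fun i => ?_
      rw [hxsc i]
      exact hx1 i
    · rw [part1]
      have hgeq : PowerSeries.mk xs
          - PowerSeries.C (R := Kinf F) ((-theta F) ^ δ) * twist F (PowerSeries.mk xs) = g := by
        refine PowerSeries.ext fun i => ?_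
        rw [map_sub, PowerSeries.coeff_C_mul,
          show (PowerSeries.coeff (R := Kinf F) i) (twist F (PowerSeries.mk xs))
            = coeffT F i (twist F (PowerSeries.mk xs)) from rfl, twist_coeff, hxsc i,
          show (PowerSeries.coeff (R := Kinf F) i) (PowerSeries.mk xs)
            = coeffT F i (PowerSeries.mk xs) from rfl, hxsc i]
        exact hx3 i
      rw [hgeq]

end Carlitz
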